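/- arXiv:2301.00419 — 2 statements merged into one kernel-verified Lean document; each statement's English description precedes it below -/
import Mathlib

section
/- Comparison principle for the semi-discrete scheme: let h ∈ (0,1), N ≥ max{1, ‖f‖_∞/2}, and write c_0(t,x) := c(t,x,α_0(t,x)), f_0(t,x) := f(t,x,α_0(t,x)). Suppose v, ṽ : [0,T]×ℝ^d → ℝ are bounded, continuous, differentiable in t, v is a supersolution (∂_t v(t,x) + c_0(t,x) + ∇^h v(t,x)·f_0(t,x) + N h Δ^h v(t,x) ≤ 0 for all (t,x) ∈ (0,T)×ℝ^d) and ṽ is a subsolution (the same expression with ṽ is ≥ 0 on (0,T)×ℝ^d), and ṽ(T,x) ≤ v(T,x) for all x ∈ ℝ^d. Then ṽ ≤ v on all of [0,T]×ℝ^d. -/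
open scoped RealInnerProductSpace
open MeasureTheory Filter Topology

noncomputable section

abbrev Rd (d : ℕ) := EuclideanSpace ℝ (Fin d)
abbrev Rm (m : ℕ) := EuclideanSpace ℝ (Fin m)

/-- Discrete gradient `∇ʰφ` in space. -/
def dGrad (d : ℕ) (h : ℝ) (φ : Rd d → ℝ) (x : Rd d) : Rd d :=
  (WithLp.equiv 2 (Fin d → ℝ)).symm fun i =>
    (φ (x + h • EuclideanSpace.single i 1) - φ (x - h • EuclideanSpace.single i 1)) / (2 * h)

/-- Discrete Laplacian `Δʰφ` in space. -/
def dLap (d : ℕ) (h : ℝ) (φ : Rd d → ℝ) (x : Rd d) : ℝ :=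
  ∑ i, (φ (x + h • EuclideanSpace.single i 1) - 2 * φ x + φ (x - h • EuclideanSpace.single i 1)) / h ^ 2

/-- Componentwise bound by the Euclidean norm. -/
lemma abs_apply_le_norm {d : ℕ} (x : Rd d) (i : Fin d) : |x i| ≤ ‖x‖ := by
  rw [show |x i| = Real.sqrt ((x i)^2) by rw [Real.sqrt_sq_eq_abs], EuclideanSpace.norm_eq]
  apply Real.sqrt_le_sqrt
  simp only [Real.norm_eq_abs, sq_abs]
  exact Finset.single_le_sum (fun j _ => sq_nonneg (x j)) (Finset.mem_univ i)

/-- Inner product with a discrete gradient, as a sum. -/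
lemma inner_dGrad_eq {d : ℕ} (h : ℝ) (φ : Rd d → ℝ) (x b : Rd d) :
    ⟪dGrad d h φ x, b⟫ = ∑ i, (φ (x + h • EuclideanSpace.single i 1)
      - φ (x - h • EuclideanSpace.single i 1)) / (2 * h) * b i := by
  simp [dGrad, PiLp.inner_apply, RCLike.inner_apply]
  exact Finset.sum_congr rfl fun i _ => mul_comm _ _

/-- Per-index monotonicity bound of the scheme. -/
lemma per_index_bound (h N Ms bi wp wm vp vm W V : ℝ)
    (hh0 : 0 < h) (hb1 : -(2*N) ≤ bi) (hb2 : bi ≤ 2*N)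
    (hp : wp - vp ≤ Ms) (hm : wm - vm ≤ Ms) :
    (wp - wm) / (2*h) * bi - (vp - vm) / (2*h) * bi
      + (N * h * ((wp - 2*W + wm) / h^2) - N * h * ((vp - 2*V + vm) / h^2))
      ≤ 2 * N / h * (Ms - (W - V)) := by
  rw [← sub_nonneg]
  have heq : 2 * N / h * (Ms - (W - V))
      - ((wp - wm) / (2*h) * bi - (vp - vm) / (2*h) * bi
        + (N * h * ((wp - 2*W + wm) / h^2) - N * h * ((vp - 2*V + vm) / h^2)))
      = (1/(2*h)) * ((2*N + bi) * (Ms - (wp - vp)) + (2*N - bi) * (Ms - (wm - vm))) := by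
    field_simp
    ring
  rw [heq]
  have e3 : (0:ℝ) ≤ (2*N + bi) * (Ms - (wp - vp)) := mul_nonneg (by linarith) (by linarith)
  have e4 : (0:ℝ) ≤ (2*N - bi) * (Ms - (wm - vm)) := mul_nonneg (by linarith) (by linarith)
  have e5 : (0:ℝ) ≤ 1/(2*h) := by positivity
  exact mul_nonneg e5 (by linarith)

/-- Summed monotonicity bound of the scheme. -/
lemma sum_index_bound (d : ℕ) (h N Ms W V : ℝ) (b wp wm vp vm : Fin d → ℝ)
    (hh0 : 0 < h) (hbi : ∀ i, |b i| ≤ 2*N)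
    (hp : ∀ i, wp i - vp i ≤ Ms) (hm : ∀ i, wm i - vm i ≤ Ms) :
    (∑ i, (wp i - wm i) / (2*h) * b i) - (∑ i, (vp i - vm i) / (2*h) * b i)
      + (N * h * (∑ i, (wp i - 2*W + wm i) / h^2) - N * h * (∑ i, (vp i - 2*V + vm i) / h^2))
      ≤ 2 * (d:ℝ) * N / h * (Ms - (W - V)) := by
  have hsplit : (∑ i, (wp i - wm i) / (2*h) * b i) - (∑ i, (vp i - vm i) / (2*h) * b i)
      + (N * h * (∑ i, (wp i - 2*W + wm i) / h^2) - N * h * (∑ i, (vp i - 2*V + vm i) / h^2))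
      = ∑ i, ((wp i - wm i) / (2*h) * b i - (vp i - vm i) / (2*h) * b i
        + (N * h * ((wp i - 2*W + wm i) / h^2) - N * h * ((vp i - 2*V + vm i) / h^2))) := by
    simp only [Finset.mul_sum, Finset.sum_sub_distrib, Finset.sum_add_distrib]
  rw [hsplit]
  calc (∑ i, ((wp i - wm i) / (2*h) * b i - (vp i - vm i) / (2*h) * b i
        + (N * h * ((wp i - 2*W + wm i) / h^2) - N * h * ((vp i - 2*V + vm i) / h^2))))
      ≤ ∑ _i : Fin d, 2 * N / h * (Ms - (W - V)) := by
        refine Finset.sum_le_sum fun i _ => ?_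
        obtain ⟨h1, h2⟩ := abs_le.1 (hbi i)
        exact per_index_bound h N Ms (b i) (wp i) (wm i) (vp i) (vm i) W V hh0 h1 h2 (hp i) (hm i)
    _ = 2 * (d:ℝ) * N / h * (Ms - (W - V)) := by
        rw [Finset.sum_const, Finset.card_univ, Fintype.card_fin, nsmul_eq_mul]
        ring

set_option maxHeartbeats 1000000 in
/-- Comparison principle for the semi-discrete scheme (Lemma 2.1). -/
theorem semidiscrete_comparison_principle
    (T : ℝ) (hT : 1 ≤ T) (d m : ℕ)
    (A : Set (Rm m)) (hA : IsCompact A)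
    (c : ℝ → Rd d → Rm m → ℝ) (f : ℝ → Rd d → Rm m → Rd d) (q : Rd d → ℝ)
    (α0 : ℝ → Rd d → Rm m) (Cb Fb K : ℝ)
    (hcb : ∀ t x a, |c t x a| ≤ Cb)
    (hfb : ∀ t x a, ‖f t x a‖ ≤ Fb)
    (hqb : ∀ x, |q x| ≤ Cb)
    (hcL : LipschitzWith (Real.toNNReal K) (fun p : ℝ × Rd d × Rm m => c p.1 p.2.1 p.2.2))
    (hfL : LipschitzWith (Real.toNNReal K) (fun p : ℝ × Rd d × Rm m => f p.1 p.2.1 p.2.2))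
    (hqL : LipschitzWith (Real.toNNReal K) q)
    (hα0A : ∀ t x, α0 t x ∈ A)
    (hα0L : LipschitzWith (Real.toNNReal K) (fun p : ℝ × Rd d => α0 p.1 p.2))
    (h N : ℝ) (hh : h ∈ Set.Ioo (0:ℝ) 1) (hN : max 1 (Fb / 2) ≤ N)
    (v w : ℝ → Rd d → ℝ)
    (hvb : ∃ M, ∀ t x, |v t x| ≤ M) (hwb : ∃ M, ∀ t x, |w t x| ≤ M)
    (hvc : Continuous (fun p : ℝ × Rd d => v p.1 p.2))
    (hwc : Continuous (fun p : ℝ × Rd d => w p.1 p.2))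
    (hvd : ∀ x, ∀ t ∈ Set.Ioo (0:ℝ) T, DifferentiableAt ℝ (fun s => v s x) t)
    (hwd : ∀ x, ∀ t ∈ Set.Ioo (0:ℝ) T, DifferentiableAt ℝ (fun s => w s x) t)
    (hsuper : ∀ x, ∀ t ∈ Set.Ioo (0:ℝ) T,
      deriv (fun s => v s x) t + c t x (α0 t x)
        + ⟪dGrad d h (fun y => v t y) x, f t x (α0 t x)⟫
        + N * h * dLap d h (fun y => v t y) x ≤ 0)
    (hsub : ∀ x, ∀ t ∈ Set.Ioo (0:ℝ) T,
      0 ≤ deriv (fun s => w s x) t + c t x (α0 t x)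
        + ⟪dGrad d h (fun y => w t y) x, f t x (α0 t x)⟫
        + N * h * dLap d h (fun y => w t y) x)
    (hterm : ∀ x, w T x ≤ v T x) :
    ∀ t ∈ Set.Icc (0:ℝ) T, ∀ x, w t x ≤ v t x := by
  obtain ⟨hh0, hh1⟩ := hh
  obtain ⟨Mv, hMv⟩ := hvb
  obtain ⟨Mw, hMw⟩ := hwb
  have hN1 : (1:ℝ) ≤ N := le_trans (le_max_left _ _) hN
  have hNF : Fb / 2 ≤ N := le_trans (le_max_right _ _) hN
  have hN0 : (0:ℝ) < N := by linarith
  set L : ℝ := 2 * (d:ℝ) * N / h with hL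
  have hL0 : (0:ℝ) ≤ L := by positivity
  set Sset : Set ℝ := {r | ∃ t x, t ∈ Set.Icc (0:ℝ) T ∧ w t x - v t x = r} with hSset
  have hne : Sset.Nonempty := ⟨w 0 0 - v 0 0, 0, 0, ⟨le_refl 0, by linarith⟩, rfl⟩
  have hbdd : BddAbove Sset := by
    refine ⟨Mw + Mv, ?_⟩
    rintro r ⟨t, x, ht, rfl⟩
    have h1 := abs_le.1 (hMw t x)
    have h2 := abs_le.1 (hMv t x)
    linarith [h1.2, h2.1]
  set S : ℝ := sSup Sset with hS
  set Ms : ℝ := max S 0 with hMs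
  have hMs0 : (0:ℝ) ≤ Ms := le_max_right _ _
  have hUle : ∀ t ∈ Set.Icc (0:ℝ) T, ∀ x, w t x - v t x ≤ Ms := fun t ht x =>
    le_trans (le_csSup hbdd ⟨t, x, ht, rfl⟩) (le_max_left _ _)
  -- core differential inequality
  have hcore : ∀ x, ∀ t ∈ Set.Ioo (0:ℝ) T,
      L * ((w t x - v t x) - Ms) ≤ deriv (fun s => w s x) t - deriv (fun s => v s x) t := by
    intro x t ht
    have hsubx := hsub x t ht
    have hsupx := hsuper x t ht
    set b : Rd d := f t x (α0 t x) with hb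
    have hbi : ∀ i, |b i| ≤ 2 * N := fun i =>
      le_trans (abs_apply_le_norm b i) (by linarith [hfb t x (α0 t x)])
    rw [inner_dGrad_eq] at hsubx hsupx
    simp only [dLap] at hsubx hsupx
    have hp : ∀ i : Fin d, w t (x + h • EuclideanSpace.single i 1)
        - v t (x + h • EuclideanSpace.single i 1) ≤ Ms :=
      fun i => hUle t (Set.Ioo_subset_Icc_self ht) _
    have hm : ∀ i : Fin d, w t (x - h • EuclideanSpace.single i 1)
        - v t (x - h • EuclideanSpace.single i 1) ≤ Ms :=
      fun i => hUle t (Set.Ioo_subset_Icc_self ht) _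
    have hsum := sum_index_bound d h N Ms (w t x) (v t x) b
      (fun i => w t (x + h • EuclideanSpace.single i 1))
      (fun i => w t (x - h • EuclideanSpace.single i 1))
      (fun i => v t (x + h • EuclideanSpace.single i 1))
      (fun i => v t (x - h • EuclideanSpace.single i 1))
      hh0 hbi hp hm
    simp only at hsum
    rw [hL]
    linarith [hsubx, hsupx, hsum]
  -- exponential bound via monotonicity
  have hclaim : ∀ x, ∀ t ∈ Set.Icc (0:ℝ) T,
      w t x - v t x ≤ Ms * (1 - Real.exp (-(L * (T - t)))) := by
    intro x t ht
    set φ : ℝ → ℝ := fun s => Real.exp (-(L * s)) * ((w s x - v s x) - Ms) with hφ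
    have hw1 : Continuous fun s => w s x := hwc.comp (continuous_id.prodMk continuous_const)
    have hv1 : Continuous fun s => v s x := hvc.comp (continuous_id.prodMk continuous_const)
    have hder : ∀ s ∈ Set.Ioo (0:ℝ) T, HasDerivAt φ
        ((-L * Real.exp (-(L * s))) * ((w s x - v s x) - Ms)
          + Real.exp (-(L * s)) * (deriv (fun r => w r x) s - deriv (fun r => v r x) s)) s := by
      intro s hs
      have h1 : HasDerivAt (fun r : ℝ => -(L * r)) (-L) s := by
        simpa using ((hasDerivAt_id s).const_mul L).fun_neg
      have hexp : HasDerivAt (fun r => Real.exp (-(L * r))) (-L * Real.exp (-(L * s))) s := by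
        simpa [mul_comm] using h1.exp
      have hg : HasDerivAt (fun r => (w r x - v r x) - Ms)
          (deriv (fun r => w r x) s - deriv (fun r => v r x) s) s :=
        (((hwd x s hs).hasDerivAt.sub (hvd x s hs).hasDerivAt)).sub_const Ms
      simpa using hexp.fun_mul hg
    have hcont : ContinuousOn φ (Set.Icc 0 T) := by
      apply Continuous.continuousOn
      exact (Real.continuous_exp.comp (continuous_const.mul continuous_id).neg).mul
        ((hw1.sub hv1).sub continuous_const)
    have hmono : MonotoneOn φ (Set.Icc 0 T) := by
      apply monotoneOn_of_deriv_nonneg (convex_Icc 0 T) hcont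
      · intro s hs
        rw [interior_Icc] at hs
        exact (hder s hs).differentiableAt.differentiableWithinAt
      · intro s hs
        rw [interior_Icc] at hs
        rw [(hder s hs).deriv]
        have hc := hcore x s hs
        have he := Real.exp_pos (-(L * s))
        nlinarith
    have hTmem : T ∈ Set.Icc (0:ℝ) T := ⟨by linarith, le_refl T⟩
    have hφle : φ t ≤ φ T := hmono ht hTmem ht.2
    have hUT : w T x - v T x ≤ 0 := by linarith [hterm x]
    have heT := Real.exp_pos (-(L * T))
    have het := Real.exp_pos (-(L * t))
    have hφT : φ T ≤ Real.exp (-(L * T)) * (-Ms) := by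
      simp only [hφ]
      apply mul_le_mul_of_nonneg_left (by linarith) heT.le
    have hmul : Real.exp (-(L * t)) * Real.exp (-(L * (T - t))) = Real.exp (-(L * T)) := by
      rw [← Real.exp_add]; ring_nf
    have hkey2 : Real.exp (-(L * t)) * ((w t x - v t x) - Ms)
        ≤ Real.exp (-(L * t)) * (-(Real.exp (-(L * (T - t))) * Ms)) := by
      have hrw : Real.exp (-(L * t)) * (-(Real.exp (-(L * (T - t))) * Ms))
          = Real.exp (-(L * T)) * (-Ms) := by rw [← hmul]; ring
      rw [hrw]
      exact le_trans hφle hφT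
    have := (mul_le_mul_iff_right₀ het).1 hkey2
    linarith
  -- conclude the supremum is nonpositive
  have hS0 : S ≤ 0 := by
    by_contra hSpos
    push_neg at hSpos
    have hMsS : Ms = S := max_eq_left hSpos.le
    have hle : S ≤ S * (1 - Real.exp (-(L * T))) := by
      apply csSup_le hne
      rintro r ⟨t, x, ht, rfl⟩
      calc w t x - v t x ≤ Ms * (1 - Real.exp (-(L * (T - t)))) := hclaim x t ht
        _ ≤ S * (1 - Real.exp (-(L * T))) := by
            rw [hMsS]
            have hee : Real.exp (-(L * T)) ≤ Real.exp (-(L * (T - t))) := by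
              apply Real.exp_le_exp.2
              have : 0 ≤ L * t := mul_nonneg hL0 ht.1
              nlinarith
            nlinarith [Real.exp_pos (-(L * (T - t)))]
    nlinarith [Real.exp_pos (-(L * T))]
  intro t ht x
  have hUx := le_csSup hbdd (⟨t, x, ht, rfl⟩ : ∃ t' x', t' ∈ Set.Icc (0:ℝ) T ∧ w t' x' - v t' x' = w t x - v t x)
  linarith
end
end

section
/- Monotonicity of semi-discrete policy iteration (Proposition 2.1): assume (A1)–(A2) and N ≥ max{1, ‖f‖_∞/2}, and let (v_n^h, α_n)_{n≥0} be bounded Lipschitz solutions of the semi-discrete PI scheme. Then for every n ≥ 0, v_{n+1}^h(t,x) ≤ v_n^h(t,x) for all (t,x) ∈ [0,T]×ℝ^d. -/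
open scoped RealInnerProductSpace
open MeasureTheory Filter Topology

open scoped NNReal

set_option maxHeartbeats 1600000
noncomputable section

lemma dGrad_apply (d : ℕ) (h : ℝ) (φ : Rd d → ℝ) (x : Rd d) (i : Fin d) :
    dGrad d h φ x i
      = (φ (x + h • EuclideanSpace.single i 1) - φ (x - h • EuclideanSpace.single i 1)) / (2 * h) := rfl

lemma dGrad_sub (d : ℕ) (h : ℝ) (φ ψ : Rd d → ℝ) (x : Rd d) :
    dGrad d h (fun y => φ y - ψ y) x = dGrad d h φ x - dGrad d h ψ x := by
  ext i
  simp only [PiLp.sub_apply, dGrad_apply]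
  ring

lemma dLap_sub (d : ℕ) (h : ℝ) (φ ψ : Rd d → ℝ) (x : Rd d) :
    dLap d h (fun y => φ y - ψ y) x = dLap d h φ x - dLap d h ψ x := by
  simp only [dLap]
  rw [← Finset.sum_sub_distrib]
  apply Finset.sum_congr rfl
  intro i _
  ring

lemma key_op (d : ℕ) (h N S : ℝ) (hh0 : 0 < h) (g : Rd d)
    (hgb : ∀ i, |g i| ≤ 2*N) (u : Rd d → ℝ) (x : Rd d) (hub : ∀ y, u y ≤ S) :
    ⟪dGrad d h u x, g⟫ + N * h * dLap d h u x ≤ 2*(d:ℝ)*N/h * (S - u x) := by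
  have hne : h ≠ 0 := ne_of_gt hh0
  have step : ∀ i : Fin d,
      dGrad d h u x i * g i
        + N*h*((u (x + h•EuclideanSpace.single i 1) - 2*u x + u (x - h•EuclideanSpace.single i 1))/h^2)
        ≤ 2*N/h*(S - u x) := by
    intro i
    have h1 : u (x + h•EuclideanSpace.single i 1) ≤ S := hub _
    have h2 : u (x - h•EuclideanSpace.single i 1) ≤ S := hub _
    have hux := hub x
    have hgi1 := (abs_le.mp (hgb i)).1
    have hgi2 := (abs_le.mp (hgb i)).2
    have ha : 0 ≤ N/h + g i/(2*h) := by
      have e : N/h + g i/(2*h) = (2*N + g i)/(2*h) := by field_simp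
      rw [e]; apply div_nonneg (by linarith) (by linarith)
    have hb : 0 ≤ N/h - g i/(2*h) := by
      have e : N/h - g i/(2*h) = (2*N - g i)/(2*h) := by field_simp
      rw [e]; apply div_nonneg (by linarith) (by linarith)
    have hident : dGrad d h u x i * g i
        + N*h*((u (x + h•EuclideanSpace.single i 1) - 2*u x + u (x - h•EuclideanSpace.single i 1))/h^2)
        = (N/h + g i/(2*h))*(u (x + h•EuclideanSpace.single i 1) - u x)
          + (N/h - g i/(2*h))*(u (x - h•EuclideanSpace.single i 1) - u x) := by
      rw [dGrad_apply]
      field_simp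
      ring
    rw [hident]
    have c1 : (N/h + g i/(2*h))*(u (x + h•EuclideanSpace.single i 1) - u x)
        ≤ (N/h + g i/(2*h))*(S - u x) := mul_le_mul_of_nonneg_left (by linarith) ha
    have c2 : (N/h - g i/(2*h))*(u (x - h•EuclideanSpace.single i 1) - u x)
        ≤ (N/h - g i/(2*h))*(S - u x) := mul_le_mul_of_nonneg_left (by linarith) hb
    calc (N/h + g i/(2*h))*(u (x + h•EuclideanSpace.single i 1) - u x)
          + (N/h - g i/(2*h))*(u (x - h•EuclideanSpace.single i 1) - u x)
        ≤ (N/h + g i/(2*h))*(S - u x) + (N/h - g i/(2*h))*(S - u x) := add_le_add c1 c2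
      _ = 2*N/h*(S - u x) := by field_simp; ring
  have hinner : ⟪dGrad d h u x, g⟫ = ∑ i, dGrad d h u x i * g i := by
    simp [PiLp.inner_apply, RCLike.inner_apply]
    exact Finset.sum_congr rfl (fun i _ => mul_comm _ _)
  rw [hinner, dLap, Finset.mul_sum, ← Finset.sum_add_distrib]
  calc ∑ i : Fin d, (dGrad d h u x i * g i
          + N*h*((u (x + h•EuclideanSpace.single i 1) - 2*u x + u (x - h•EuclideanSpace.single i 1))/h^2))
      ≤ ∑ _i : Fin d, 2*N/h*(S - u x) := Finset.sum_le_sum (fun i _ => step i)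
    _ = (d:ℝ) * (2*N/h*(S - u x)) := by
        rw [Finset.sum_const, Finset.card_univ, Fintype.card_fin, nsmul_eq_mul]
    _ = 2*(d:ℝ)*N/h*(S - u x) := by ring

/-- Monotonicity of semi-discrete policy iteration (Proposition 2.1). -/
theorem semidiscrete_PI_monotone
    (T : ℝ) (hT : 1 ≤ T) (d m : ℕ)
    (A : Set (Rm m)) (hA : IsCompact A)
    (c : ℝ → Rd d → Rm m → ℝ) (f : ℝ → Rd d → Rm m → Rd d) (q : Rd d → ℝ)
    (α : ℝ → Rd d → Rd d → Rm m) (α0 : ℝ → Rd d → Rm m) (Cb Fb K : ℝ)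
    (hcb : ∀ t x a, |c t x a| ≤ Cb)
    (hfb : ∀ t x a, ‖f t x a‖ ≤ Fb)
    (hqb : ∀ x, |q x| ≤ Cb)
    (hcL : LipschitzWith (Real.toNNReal K) (fun p : ℝ × Rd d × Rm m => c p.1 p.2.1 p.2.2))
    (hfL : LipschitzWith (Real.toNNReal K) (fun p : ℝ × Rd d × Rm m => f p.1 p.2.1 p.2.2))
    (hqL : LipschitzWith (Real.toNNReal K) q)
    (hαA : ∀ t x p, α t x p ∈ A)
    (hαmin : ∀ t x p, ∀ a ∈ A, c t x (α t x p) + ⟪p, f t x (α t x p)⟫ ≤ c t x a + ⟪p, f t x a⟫)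
    (hαL : LipschitzWith (Real.toNNReal K) (fun p : ℝ × Rd d × Rd d => α p.1 p.2.1 p.2.2))
    (hα0A : ∀ t x, α0 t x ∈ A)
    (hα0L : LipschitzWith (Real.toNNReal K) (fun p : ℝ × Rd d => α0 p.1 p.2))
    (h N : ℝ) (hh : h ∈ Set.Ioo (0:ℝ) 1) (hN : max 1 (Fb / 2) ≤ N)
    (v : ℕ → ℝ → Rd d → ℝ) (αn : ℕ → ℝ → Rd d → Rm m)
    (hαn0 : αn 0 = α0)
    (hαnS : ∀ n t x, αn (n+1) t x = α t x (dGrad d h (fun y => v n t y) x))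
    (hvb : ∀ n, ∃ M, ∀ t x, |v n t x| ≤ M)
    (hvL : ∀ n, ∃ L, LipschitzWith (Real.toNNReal L) (fun p : ℝ × Rd d => v n p.1 p.2))
    (hvd : ∀ n x, ∀ t ∈ Set.Ioo (0:ℝ) T, DifferentiableAt ℝ (fun s => v n s x) t)
    (hpde : ∀ n x, ∀ t ∈ Set.Ioo (0:ℝ) T,
      deriv (fun s => v n s x) t + c t x (αn n t x)
        + ⟪dGrad d h (fun y => v n t y) x, f t x (αn n t x)⟫
        = -(N * h * dLap d h (fun y => v n t y) x))
    (hterm : ∀ n x, v n T x = q x) :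
    ∀ n, ∀ t ∈ Set.Icc (0:ℝ) T, ∀ x, v (n+1) t x ≤ v n t x := by
  obtain ⟨hh0, hh1⟩ := hh
  have hT0 : (0:ℝ) < T := lt_of_lt_of_le one_pos hT
  have hN1 : (1:ℝ) ≤ N := le_trans (le_max_left _ _) hN
  have hN0 : (0:ℝ) < N := lt_of_lt_of_le one_pos hN1
  have hFbN : Fb ≤ 2 * N := by
    have := le_trans (le_max_right 1 (Fb/2)) hN; linarith
  haveI : Nonempty (Rd d) := ⟨0⟩
  have hαnA : ∀ n t x, αn n t x ∈ A := by
    intro n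
    cases n with
    | zero => intro t x; rw [hαn0]; exact hα0A t x
    | succ k => intro t x; rw [hαnS]; exact hαA _ _ _
  intro n
  set w : ℝ → Rd d → ℝ := fun t x => v (n+1) t x - v n t x with hw
  obtain ⟨M1, hM1⟩ := hvb (n+1)
  obtain ⟨M2, hM2⟩ := hvb n
  have hwb : ∀ t x, w t x ≤ M1 + M2 := by
    intro t x
    have := abs_sub (v (n+1) t x) (v n t x)
    have h1 := hM1 t x; have h2 := hM2 t x
    simp only [hw]
    have := (abs_le.mp h1).2
    have := (abs_le.mp h2).1
    linarith
  obtain ⟨L1, hL1⟩ := hvL (n+1)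
  obtain ⟨L2, hL2⟩ := hvL n
  set L' : ℝ := ((Real.toNNReal L1 : ℝ≥0) : ℝ) + ((Real.toNNReal L2 : ℝ≥0) : ℝ) with hL'
  have hL'0 : 0 ≤ L' := by positivity
  have lipv : ∀ (k : ℕ) (Lk : ℝ≥0), LipschitzWith Lk (fun p : ℝ × Rd d => v k p.1 p.2) →
      ∀ t s x, |v k t x - v k s x| ≤ (Lk : ℝ) * |t - s| := by
    intro k Lk hk t s x
    have h1 := hk.dist_le_mul (t, x) (s, x)
    have h2 : dist ((t, x) : ℝ × Rd d) ((s, x) : ℝ × Rd d) = |t - s| := by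
      rw [Prod.dist_eq]
      simp [Real.dist_eq, dist_self]
    rw [h2] at h1
    simpa [Real.dist_eq] using h1
  have hwLt : ∀ t s x, |w t x - w s x| ≤ L' * |t - s| := by
    intro t s x
    have h1 := lipv (n+1) _ hL1 t s x
    have h2 := lipv n _ hL2 t s x
    have h3 : |w t x - w s x|
        = |(v (n+1) t x - v (n+1) s x) - (v n t x - v n s x)| := by
      simp only [hw]; congr 1; ring
    rw [h3, hL']
    calc |(v (n+1) t x - v (n+1) s x) - (v n t x - v n s x)|
        ≤ |v (n+1) t x - v (n+1) s x| + |v n t x - v n s x| := abs_sub _ _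
      _ ≤ _ := by rw [add_mul]; exact add_le_add h1 h2
  have hwc : ∀ x, Continuous fun r : ℝ => w r x := by
    intro x
    have c1 : Continuous fun r : ℝ => v (n+1) r x :=
      hL1.continuous.comp (continuous_id.prodMk continuous_const)
    have c2 : Continuous fun r : ℝ => v n r x :=
      hL2.continuous.comp (continuous_id.prodMk continuous_const)
    simp only [hw]
    exact c1.sub c2
  have hbdd : ∀ t, BddAbove (Set.range fun x => w t x) := by
    intro t
    refine ⟨M1 + M2, ?_⟩
    rintro y ⟨x, rfl⟩
    exact hwb t x
  set S : ℝ → ℝ := fun t => ⨆ x, w t x with hS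
  have hwS : ∀ t x, w t x ≤ S t := by
    intro t x; simp only [hS]; exact le_ciSup (hbdd t) x
  have hSle : ∀ t a, (∀ x, w t x ≤ a) → S t ≤ a := by
    intro t a hx; simp only [hS]; exact ciSup_le hx
  have hST : S T = 0 := by
    have h0 : ∀ x : Rd d, w T x = 0 := by
      intro x; simp only [hw]; rw [hterm, hterm]; ring
    simp only [hS]
    rw [iSup_congr h0]
    exact ciSup_const
  have hSL : ∀ t s, S t ≤ S s + L' * |t - s| := by
    intro t s
    apply hSle
    intro x
    have h1 := (abs_le.mp (hwLt t s x)).2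
    have h2 := hwS s x
    linarith
  set κ : ℝ := 2*(d:ℝ)*N/h with hκ
  have hκ0 : 0 ≤ κ := by rw [hκ]; positivity
  have hderiv : ∀ x, ∀ r ∈ Set.Ioo (0:ℝ) T,
      -(κ * (S r - w r x)) ≤ deriv (fun u => w u x) r := by
    intro x r hr
    have hd1 := hvd (n+1) x r hr
    have hd2 := hvd n x r hr
    have hdw : deriv (fun u => w u x) r
        = deriv (fun u => v (n+1) u x) r - deriv (fun u => v n u x) r := by
      simp only [hw]
      exact deriv_sub hd1 hd2
    have e1 := hpde (n+1) x r hr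
    have e2 := hpde n x r hr
    have hmin := hαmin r x (dGrad d h (fun y => v n r y) x) (αn n r x) (hαnA n r x)
    rw [← hαnS n r x] at hmin
    have hgb : ∀ i, |(f r x (αn (n+1) r x)) i| ≤ 2*N := by
      intro i
      have h2 := abs_real_inner_le_norm (EuclideanSpace.single i (1:ℝ)) (f r x (αn (n+1) r x))
      have h1 : |(f r x (αn (n+1) r x)) i| ≤ ‖f r x (αn (n+1) r x)‖ := by
        simpa [EuclideanSpace.inner_single_left, EuclideanSpace.norm_single] using h2
      exact h1.trans ((hfb _ _ _).trans hFbN)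
    have hop := key_op d h N (S r) hh0 (f r x (αn (n+1) r x)) hgb (fun y => w r y) x
      (fun y => hwS r y)
    have hgs : dGrad d h (fun y => w r y) x
        = dGrad d h (fun y => v (n+1) r y) x - dGrad d h (fun y => v n r y) x := by
      simp only [hw]
      exact dGrad_sub d h _ _ x
    have hls : dLap d h (fun y => w r y) x
        = dLap d h (fun y => v (n+1) r y) x - dLap d h (fun y => v n r y) x := by
      simp only [hw]
      exact dLap_sub d h _ _ x
    rw [hgs, hls, inner_sub_left, ← hκ] at hop
    rw [hdw]
    linarith
  have hstep : ∀ t s : ℝ, 0 ≤ t → t ≤ s → s ≤ T → κ * (s - t) ≤ 1 →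
      S t ≤ S s + 2*κ*L'*(s - t)^2 := by
    intro t s ht hts hsT hκδ
    apply hSle
    intro x
    have hcont : ContinuousOn (fun r => w r x) (Set.Icc t s) := (hwc x).continuousOn
    have hdiff : DifferentiableOn ℝ (fun r => w r x) (interior (Set.Icc t s)) := by
      rw [interior_Icc]
      intro r hr
      have hr' : r ∈ Set.Ioo 0 T := ⟨lt_of_le_of_lt ht hr.1, lt_of_lt_of_le hr.2 hsT⟩
      have := (hvd (n+1) x r hr').sub (hvd n x r hr')
      simp only [hw]
      exact this.differentiableWithinAt
    have hbound : ∀ r ∈ interior (Set.Icc t s),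
        -(κ*(S s - w s x + 2*L'*(s - t))) ≤ deriv (fun u => w u x) r := by
      rw [interior_Icc]
      intro r hr
      have hr' : r ∈ Set.Ioo 0 T := ⟨lt_of_le_of_lt ht hr.1, lt_of_lt_of_le hr.2 hsT⟩
      have h1 := hderiv x r hr'
      have h2 : S r ≤ S s + L'*(s - r) := by
        have := hSL r s
        rw [abs_sub_comm, abs_of_nonneg (show (0:ℝ) ≤ s - r by linarith [hr.2])] at this
        exact this
      have h3 : w s x - L'*(s - r) ≤ w r x := by
        have h4 := (abs_le.mp (hwLt s r x)).2
        rw [abs_of_nonneg (show (0:ℝ) ≤ s - r by linarith [hr.2])] at h4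
        linarith
      have h5 : L'*(s - r) ≤ L'*(s - t) :=
        mul_le_mul_of_nonneg_left (by linarith [hr.1]) hL'0
      have h6 : S r - w r x ≤ S s - w s x + 2*L'*(s - t) := by linarith
      have h7 : -(κ*(S s - w s x + 2*L'*(s - t))) ≤ -(κ*(S r - w r x)) := by
        apply neg_le_neg
        exact mul_le_mul_of_nonneg_left h6 hκ0
      linarith
    have hm := Convex.mul_sub_le_image_sub_of_le_deriv (convex_Icc t s) hcont hdiff hbound
      t (Set.left_mem_Icc.mpr hts) s (Set.right_mem_Icc.mpr hts) hts
    have h2 : (1 - κ*(s - t))*(w s x) ≤ (1 - κ*(s - t))*(S s) :=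
      mul_le_mul_of_nonneg_left (hwS s x) (by linarith)
    nlinarith [hm, h2]
  have key : ∀ (k : ℕ) (t : ℝ), 0 ≤ t → t ≤ T → κ * (T - t) ≤ (k:ℝ)+1 →
      S t ≤ 2*κ*L'*(T - t)^2 / ((k:ℝ)+1) := by
    intro k t ht htT hκT
    set δ : ℝ := (T - t)/((k:ℝ)+1) with hδdef
    have hk1 : (0:ℝ) < (k:ℝ)+1 := by positivity
    have hδ0 : 0 ≤ δ := div_nonneg (by linarith) hk1.le
    have hκδ : κ * δ ≤ 1 := by
      have e : κ * δ = κ*(T - t)/((k:ℝ)+1) := by rw [hδdef]; ring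
      rw [e]
      exact (div_le_one hk1).mpr hκT
    have hkδ : ((k:ℝ)+1)*δ = T - t := by
      rw [hδdef]; field_simp
    have main : ∀ j : ℕ, (j:ℝ) ≤ (k:ℝ)+1 → S (T - (j:ℝ)*δ) ≤ (j:ℝ)*(2*κ*L'*δ^2) := by
      intro j
      induction j with
      | zero => intro _; simp [hST]
      | succ j ih =>
        intro hj
        push_cast at hj ⊢
        have ih' := ih (by linarith)
        have hjδ : 0 ≤ (j:ℝ)*δ := mul_nonneg (Nat.cast_nonneg j) hδ0
        have ht0 : 0 ≤ T - ((j:ℝ)+1)*δ := by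
          have h1 : ((j:ℝ)+1)*δ ≤ ((k:ℝ)+1)*δ := mul_le_mul_of_nonneg_right hj hδ0
          linarith
        have hts : T - ((j:ℝ)+1)*δ ≤ T - (j:ℝ)*δ := by nlinarith
        have hsT2 : T - (j:ℝ)*δ ≤ T := by linarith
        have heq : (T - (j:ℝ)*δ) - (T - ((j:ℝ)+1)*δ) = δ := by ring
        have hκ1 : κ * ((T - (j:ℝ)*δ) - (T - ((j:ℝ)+1)*δ)) ≤ 1 := by rw [heq]; exact hκδ
        have hs := hstep (T - ((j:ℝ)+1)*δ) (T - (j:ℝ)*δ) ht0 hts hsT2 hκ1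
        rw [heq] at hs
        linarith
    have hfin := main (k+1) (by push_cast; linarith)
    push_cast at hfin
    rw [show T - ((k:ℝ)+1)*δ = t by linarith] at hfin
    have e2 : ((k:ℝ)+1)*(2*κ*L'*δ^2) = 2*κ*L'*(T - t)^2/((k:ℝ)+1) := by
      rw [hδdef]; field_simp
    rw [e2] at hfin
    exact hfin
  have hS0 : ∀ t : ℝ, 0 ≤ t → t ≤ T → S t ≤ 0 := by
    intro t ht0 htT
    by_contra hcon
    push_neg at hcon
    obtain ⟨k, hk⟩ := exists_nat_gt (max (κ*(T - t)) (2*κ*L'*(T - t)^2/(S t)))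
    have hk1 : κ*(T - t) ≤ (k:ℝ)+1 := by
      have := le_max_left (κ*(T - t)) (2*κ*L'*(T - t)^2/(S t))
      linarith
    have hkey := key k t ht0 htT hk1
    have h2 : 2*κ*L'*(T - t)^2/(S t) < (k:ℝ)+1 := by
      have := le_max_right (κ*(T - t)) (2*κ*L'*(T - t)^2/(S t))
      linarith
    have h3 : 2*κ*L'*(T - t)^2 < ((k:ℝ)+1)*(S t) := by
      rw [div_lt_iff₀ hcon] at h2
      linarith
    have h4 : S t * ((k:ℝ)+1) ≤ 2*κ*L'*(T - t)^2 :=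
      (le_div_iff₀ (by positivity)).mp hkey
    nlinarith
  intro t ht x
  have hfin := (hwS t x).trans (hS0 t ht.1 ht.2)
  simp only [hw] at hfin
  linarith
end
end
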